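/- Let G be a directed graph over F_2 and x_k a vertex of G that lies on no directed cycle of G. Let G_k be the induced subgraph on V(G)\{x_k}. If minrank_2(G_k) = m − 1, then minrank_2(G) = m. (Equivalently: if x_k lies on no directed cycle, then minrank_2(G) = minrank_2(G_k) + 1.) -/

import Mathlib

/-- A matrix `A` fits a directed graph with edge relation `E` if it has 1's on the
diagonal and 0's at off-diagonal non-edges. -/
def Fits {V : Type*} {F : Type*} [Field F] (E : V → V → Prop)
    (A : Matrix V V F) : Prop :=
  (∀ v, A v v = 1) ∧ ∀ u v, u ≠ v → ¬ E u v → A u v = 0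

/-- The minrank over `F` of the directed graph with edge relation `E`. -/
noncomputable def minrank (F : Type*) [Field F] {V : Type*} [Fintype V]
    (E : V → V → Prop) : ℕ :=
  sInf {r | ∃ A : Matrix V V F, Fits E A ∧ A.rank = r}

/-- Vertex `k` lies on a directed cycle (on at least two distinct vertices). -/
def OnCycle {V : Type*} (E : V → V → Prop) (k : V) : Prop :=
  ∃ (n : ℕ) (f : Fin (n + 2) → V), Function.Injective f ∧ f 0 = k ∧
    (∀ i : Fin (n + 1), E (f i.castSucc) (f i.succ)) ∧ E (f (Fin.last (n + 1))) (f 0)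

open Matrix LinearMap Module


open Matrix LinearMap Module

set_option linter.unusedSectionVars false

section LA
variable {F : Type*} [Field F] {V : Type*} [Fintype V]

/-- Extension by zero as a linear map. -/
def zext (p : V → Prop) [DecidablePred p] : ({v // p v} → F) →ₗ[F] (V → F) where
  toFun x v := if h : p v then x ⟨v, h⟩ else 0
  map_add' x y := by funext v; by_cases h : p v <;> simp [h]
  map_smul' c x := by funext v; by_cases h : p v <;> simp [h]

lemma zext_apply (p : V → Prop) [DecidablePred p] (x : {v // p v} → F) (v : V) :
    zext (F := F) p x v = if h : p v then x ⟨v, h⟩ else 0 := rfl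

lemma sum_split (p : V → Prop) [DecidablePred p] (g : V → F) :
    ∑ v, g v = (∑ v : {v // p v}, g v.1) + ∑ v : {v // ¬ p v}, g v.1 := by
  classical
  rw [← Finset.sum_filter_add_sum_filter_not Finset.univ p g]
  congr 1
  · rw [Finset.sum_subtype (p := p) (Finset.univ.filter p) (by simp) g]
  · rw [Finset.sum_subtype (p := fun v => ¬ p v) (Finset.univ.filter (fun v => ¬ p v))
      (by simp) g]

lemma mulVec_split (A : Matrix V V F) (p : V → Prop) [DecidablePred p] (x : V → F) (u : V) :
    A.mulVec x u = (∑ v : {v // p v}, A u v.1 * x v.1) + ∑ v : {v // ¬ p v}, A u v.1 * x v.1 := by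
  rw [Matrix.mulVec, dotProduct, sum_split p]

lemma submatrix_mulVec (A : Matrix V V F) (p : V → Prop) [DecidablePred p]
    (x : {v // p v} → F) (u : {v // p v}) :
    (A.submatrix (Subtype.val : {v // p v} → V) (Subtype.val : {v // p v} → V)).mulVec x u
      = ∑ v : {v // p v}, A u.1 v.1 * x v :=
  rfl

lemma finrank_aux {M N P : Type*} [AddCommGroup M] [AddCommGroup N] [AddCommGroup P]
    [Module F M] [Module F N] [Module F P] [FiniteDimensional F M]
    (W : Submodule F M) (π : M →ₗ[F] N) (g : P →ₗ[F] M)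
    (hg1 : LinearMap.range g ≤ W) (hg2 : LinearMap.range g ≤ LinearMap.ker π) :
    finrank F (W.map π) + finrank F (LinearMap.range g) ≤ finrank F W := by
  have h1 := (π.comp W.subtype).finrank_range_add_finrank_ker
  have h2 : LinearMap.range (π.comp W.subtype) = W.map π := by
    rw [LinearMap.range_comp, Submodule.range_subtype]
  have h3 : LinearMap.ker (π.comp W.subtype) = Submodule.comap W.subtype (LinearMap.ker π) :=
    LinearMap.ker_comp _ _
  have h4 : Submodule.comap W.subtype (LinearMap.range g)
      ≤ LinearMap.ker (π.comp W.subtype) := by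
    rw [h3]; exact Submodule.comap_mono hg2
  have h5 : finrank F (LinearMap.range g)
      = finrank F (Submodule.comap W.subtype (LinearMap.range g)) :=
    (Submodule.comapSubtypeEquivOfLe hg1).finrank_eq.symm
  have h6 : finrank F (Submodule.comap W.subtype (LinearMap.range g))
      ≤ finrank F (LinearMap.ker (π.comp W.subtype)) := Submodule.finrank_mono h4
  rw [h2] at h1
  omega

lemma rank_block_le (A : Matrix V V F) (p : V → Prop) [DecidablePred p]
    (h : ∀ u v, ¬ p u → p v → A u v = 0) :
    (A.submatrix (Subtype.val : {v // p v} → V) (Subtype.val : {v // p v} → V)).rank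
      + (A.submatrix (Subtype.val : {v // ¬ p v} → V) (Subtype.val : {v // ¬ p v} → V)).rank
      ≤ A.rank := by
  classical
  have key := finrank_aux (F := F) (LinearMap.range A.mulVecLin)
      (LinearMap.funLeft F F (Subtype.val : {v // ¬ p v} → V)) (A.mulVecLin.comp (zext p))
      (by rintro _ ⟨x, rfl⟩; exact ⟨zext p x, rfl⟩)
      (by
        rintro _ ⟨x, rfl⟩
        rw [LinearMap.mem_ker]
        funext u
        have : (A.mulVec (zext p x)) u.1 = 0 := by
          rw [mulVec_split A p]
          have h1 : (∑ v : {v // p v}, A u.1 v.1 * zext p x v.1) = 0 := by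
            apply Finset.sum_eq_zero; intro v _
            rw [h u.1 v.1 u.2 v.2, zero_mul]
          have h2 : (∑ v : {v // ¬ p v}, A u.1 v.1 * zext p x v.1) = 0 := by
            apply Finset.sum_eq_zero; intro v _
            rw [zext_apply, dif_neg v.2, mul_zero]
          rw [h1, h2, add_zero]
        exact this)
  -- identify the two summands
  have hQ : (A.submatrix (Subtype.val : {v // ¬ p v} → V) (Subtype.val : {v // ¬ p v} → V)).rank
      = finrank F ((LinearMap.range A.mulVecLin).map
          (LinearMap.funLeft F F (Subtype.val : {v // ¬ p v} → V))) := by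
    have hcomm : (LinearMap.funLeft F F (Subtype.val : {v // ¬ p v} → V)).comp A.mulVecLin
        = ((A.submatrix (Subtype.val : {v // ¬ p v} → V)
            (Subtype.val : {v // ¬ p v} → V)).mulVecLin).comp
            (LinearMap.funLeft F F (Subtype.val : {v // ¬ p v} → V)) := by
      apply LinearMap.ext; intro x; funext u
      have hz : (∑ v : {v // p v}, A u.1 v.1 * x v.1) = 0 := by
        apply Finset.sum_eq_zero; intro v _
        rw [h u.1 v.1 u.2 v.2, zero_mul]
      simp only [LinearMap.comp_apply, mulVecLin_apply, LinearMap.funLeft_apply]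
      rw [mulVec_split A p x u.1, hz, zero_add]
      rfl
    rw [Matrix.rank, ← LinearMap.range_comp, hcomm, LinearMap.range_comp,
      LinearMap.range_eq_top.mpr
        (LinearMap.funLeft_surjective_of_injective F F _ Subtype.val_injective),
      Submodule.map_top]
  have hP : (A.submatrix (Subtype.val : {v // p v} → V) (Subtype.val : {v // p v} → V)).rank
      ≤ finrank F (LinearMap.range (A.mulVecLin.comp (zext p))) := by
    have hfact : (A.submatrix (Subtype.val : {v // p v} → V)
        (Subtype.val : {v // p v} → V)).mulVecLin
        = (LinearMap.funLeft F F (Subtype.val : {v // p v} → V)).comp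
            (A.mulVecLin.comp (zext p)) := by
      apply LinearMap.ext; intro x; funext u
      simp only [LinearMap.comp_apply, mulVecLin_apply, LinearMap.funLeft_apply]
      rw [submatrix_mulVec A p x u, mulVec_split A p (zext p x) u.1]
      have h2 : (∑ v : {v // ¬ p v}, A u.1 v.1 * zext p x v.1) = 0 := by
        apply Finset.sum_eq_zero; intro v _
        rw [zext_apply, dif_neg v.2, mul_zero]
      rw [h2, add_zero]
      apply Finset.sum_congr rfl
      intro v _
      rw [zext_apply, dif_pos v.2]
    rw [Matrix.rank, hfact, LinearMap.range_comp]
    exact Submodule.finrank_map_le _ _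
  rw [hQ]
  have hrk : A.rank = finrank F (LinearMap.range A.mulVecLin) := rfl
  omega

lemma rank_le_block (A : Matrix V V F) (p : V → Prop) [DecidablePred p]
    (h1 : ∀ u v, p u → ¬ p v → A u v = 0) (h2 : ∀ u v, ¬ p u → p v → A u v = 0) :
    A.rank ≤ (A.submatrix (Subtype.val : {v // p v} → V) (Subtype.val : {v // p v} → V)).rank
      + (A.submatrix (Subtype.val : {v // ¬ p v} → V) (Subtype.val : {v // ¬ p v} → V)).rank := by
  classical
  set f1 : (V → F) →ₗ[F] (V → F) :=
    (zext p).comp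
      ((A.submatrix (Subtype.val : {v // p v} → V)
        (Subtype.val : {v // p v} → V)).mulVecLin.comp
        (LinearMap.funLeft F F (Subtype.val : {v // p v} → V))) with hf1
  set f2 : (V → F) →ₗ[F] (V → F) :=
    (zext (fun v => ¬ p v)).comp
      ((A.submatrix (Subtype.val : {v // ¬ p v} → V)
        (Subtype.val : {v // ¬ p v} → V)).mulVecLin.comp
        (LinearMap.funLeft F F (Subtype.val : {v // ¬ p v} → V))) with hf2
  have hsplit : A.mulVecLin = f1 + f2 := by
    apply LinearMap.ext; intro x; funext u
    simp only [LinearMap.add_apply, hf1, hf2, LinearMap.comp_apply, mulVecLin_apply,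
      LinearMap.funLeft_apply, Pi.add_apply]
    by_cases hu : p u
    · rw [zext_apply, zext_apply, dif_pos hu, dif_neg (not_not_intro hu), add_zero,
        submatrix_mulVec A p _ ⟨u, hu⟩, mulVec_split A p x u]
      have : (∑ v : {v // ¬ p v}, A u v.1 * x v.1) = 0 := by
        apply Finset.sum_eq_zero; intro v _
        rw [h1 u v.1 hu v.2, zero_mul]
      rw [this, add_zero]
      rfl
    · rw [zext_apply, zext_apply, dif_neg hu, dif_pos hu, zero_add,
        submatrix_mulVec A (fun v => ¬ p v) _ ⟨u, hu⟩, mulVec_split A p x u]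
      have : (∑ v : {v // p v}, A u v.1 * x v.1) = 0 := by
        apply Finset.sum_eq_zero; intro v _
        rw [h2 u v.1 hu v.2, zero_mul]
      rw [this, zero_add]
      rfl
  have hr : LinearMap.range A.mulVecLin ≤ LinearMap.range f1 ⊔ LinearMap.range f2 := by
    rw [hsplit]
    rintro _ ⟨x, rfl⟩
    exact Submodule.add_mem_sup (LinearMap.mem_range_self f1 x) (LinearMap.mem_range_self f2 x)
  have hsup : finrank F ↥(LinearMap.range f1 ⊔ LinearMap.range f2)
      ≤ finrank F (LinearMap.range f1) + finrank F (LinearMap.range f2) := by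
    have := Submodule.finrank_sup_add_finrank_inf_eq (LinearMap.range f1) (LinearMap.range f2)
    omega
  have h1' : finrank F (LinearMap.range f1)
      ≤ (A.submatrix (Subtype.val : {v // p v} → V) (Subtype.val : {v // p v} → V)).rank := by
    rw [hf1, LinearMap.range_comp]
    calc finrank F (Submodule.map _ _) ≤ finrank F (LinearMap.range
          ((A.submatrix (Subtype.val : {v // p v} → V)
            (Subtype.val : {v // p v} → V)).mulVecLin.comp
            (LinearMap.funLeft F F (Subtype.val : {v // p v} → V)))) :=
          Submodule.finrank_map_le _ _
      _ ≤ _ := Submodule.finrank_mono (LinearMap.range_comp_le_range _ _)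
  have h2' : finrank F (LinearMap.range f2)
      ≤ (A.submatrix (Subtype.val : {v // ¬ p v} → V)
          (Subtype.val : {v // ¬ p v} → V)).rank := by
    rw [hf2, LinearMap.range_comp]
    calc finrank F (Submodule.map _ _) ≤ finrank F (LinearMap.range
          ((A.submatrix (Subtype.val : {v // ¬ p v} → V)
            (Subtype.val : {v // ¬ p v} → V)).mulVecLin.comp
            (LinearMap.funLeft F F (Subtype.val : {v // ¬ p v} → V)))) :=
          Submodule.finrank_map_le _ _
      _ ≤ _ := Submodule.finrank_mono (LinearMap.range_comp_le_range _ _)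
  have hA : A.rank ≤ finrank F ↥(LinearMap.range f1 ⊔ LinearMap.range f2) := by
    rw [show A.rank = finrank F (LinearMap.range A.mulVecLin) from rfl]
    exact Submodule.finrank_mono hr
  omega

lemma rank_unique_one {ι : Type*} [Fintype ι] [Unique ι] [DecidableEq ι]
    (M : Matrix ι ι F) (h : M default default = 1) : M.rank = 1 := by
  have : M = 1 := by
    ext i j
    rw [Unique.eq_default i, Unique.eq_default j]
    simp [Matrix.one_apply, h]
  rw [this, Matrix.rank_one, Fintype.card_unique]

lemma rank_submatrix_comp {α β : Type*} [Fintype α] [Fintype β] [DecidableEq α] [DecidableEq β]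
    (A : Matrix V V F) (f : α → V) (e : β ≃ α) :
    (A.submatrix (f ∘ e) (f ∘ e)).rank = (A.submatrix f f).rank := by
  rw [← Matrix.submatrix_submatrix]
  exact Matrix.rank_submatrix (A.submatrix f f) e e

end LA

section Walk
variable {V : Type*} {E : V → V → Prop} {k : V}

lemma exists_dup {l : List V} (h : ¬ l.Nodup) :
    ∃ (x : V) (l1 l2 l3 : List V), l = l1 ++ x :: (l2 ++ x :: l3) := by
  classical
  induction l with
  | nil => simp at h
  | cons a l ih =>
    by_cases ha : a ∈ l
    · obtain ⟨s, t, rfl⟩ := List.append_of_mem ha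
      exact ⟨a, [], s, t, by simp⟩
    · have hnd : ¬ l.Nodup := by
        intro hnd
        exact h (List.nodup_cons.mpr ⟨ha, hnd⟩)
      obtain ⟨x, l1, l2, l3, rfl⟩ := ih hnd
      exact ⟨x, a :: l1, l2, l3, by simp⟩

lemma cycle_of_walk : ∀ (n : ℕ) (l : List V), l.length ≤ n →
    (∃ x ∈ l, x ≠ k) → List.Chain' E (k :: (l ++ [k])) → OnCycle E k := by
  intro n
  induction n with
  | zero =>
    intro l hlen hx _
    rw [Nat.le_zero, List.length_eq_zero_iff] at hlen
    subst hlen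
    simp at hx
  | succ n ih =>
    intro l hlen hx hch
    by_cases hkin : k ∈ l
    · obtain ⟨la, lb, rfl⟩ := List.append_of_mem hkin
      have hsplit : List.Chain' E ((k :: la) ++ k :: (lb ++ [k])) := by
        simpa [List.append_assoc] using hch
      replace hsplit := List.isChain_split.mp hsplit
      obtain ⟨x, hxmem, hxk⟩ := hx
      have hlen' : la.length + (lb.length + 1) ≤ n + 1 := by simpa using hlen
      rcases List.mem_append.mp hxmem with hxa | hxb
      · refine ih la (by omega) ⟨x, hxa, hxk⟩ ?_
        simpa [List.append_assoc, List.Chain'] using hsplit.1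
      · rcases List.mem_cons.mp hxb with rfl | hxb'
        · exact absurd rfl hxk
        · exact ih lb (by omega) ⟨x, hxb', hxk⟩ hsplit.2
    · by_cases hnd : l.Nodup
      · -- build the cycle
        obtain ⟨y, m⟩ : ∃ y m, l = y :: m := by
          cases l with
          | nil => simp at hx
          | cons y m => exact ⟨y, m, rfl⟩
        obtain ⟨hy, rfl⟩ := m
        have ndL : (k :: y :: hy).Nodup := List.nodup_cons.mpr ⟨hkin, hnd⟩
        have hchain : List.Chain' E ((k :: y :: hy) ++ [k]) := by simpa using hch
        have hget := List.isChain_iff_getElem.mp hchain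
        have hLlen : (k :: y :: hy).length = hy.length + 2 := by simp
        have hlt : ∀ i : Fin (hy.length + 2), (i : ℕ) < (k :: y :: hy).length := by
          intro i; rw [hLlen]; exact i.isLt
        refine ⟨hy.length, fun i => (k :: y :: hy)[(i : ℕ)]'(hlt i), ?_, ?_, ?_, ?_⟩
        · intro i j hij
          have h1 : (k :: y :: hy).get ⟨(i : ℕ), hlt i⟩ = (k :: y :: hy).get ⟨(j : ℕ), hlt j⟩ := by
            simpa [List.get_eq_getElem] using hij
          have h2 := List.nodup_iff_injective_get.mp ndL h1
          exact Fin.ext (congrArg Fin.val h2)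
        · rfl
        · intro i
          have hi : (i : ℕ) + 1 < ((k :: y :: hy) ++ [k]).length := by
            have := i.isLt; simp
          have h := hget (i : ℕ) hi
          rw [List.getElem_append_left (by have := i.isLt; simp only [List.length_cons]; omega),
            List.getElem_append_left (by have := i.isLt; simp only [List.length_cons]; omega)] at h
          simpa [Fin.coe_castSucc, Fin.val_succ] using h
        · have hi : hy.length + 1 + 1 < ((k :: y :: hy) ++ [k]).length := by simp
          have h := hget (hy.length + 1) hi
          rw [List.getElem_append_left (by simp),
            List.getElem_append_right (by simp)] at h
          simp only [Fin.val_last]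
          simpa using h
      · obtain ⟨x, l1, l2, l3, rfl⟩ := exists_dup hnd
        have c0 : List.Chain' E ((k :: l1) ++ x :: (l2 ++ x :: (l3 ++ [k]))) := by
          simpa [List.append_assoc] using hch
        replace c0 := List.isChain_split.mp c0
        have c2' : List.Chain' E ((x :: l2) ++ x :: (l3 ++ [k])) := by
          simpa [List.Chain'] using c0.2
        replace c2' := List.isChain_split.mp c2'
        have cnew : List.Chain' E ((k :: l1) ++ x :: (l3 ++ [k])) :=
          List.isChain_split.mpr ⟨c0.1, c2'.2⟩
        have hxk : x ≠ k := by
          rintro rfl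
          exact hkin (by simp)
        have hlen' : l1.length + (l2.length + (l3.length + 1) + 1) ≤ n + 1 := by
          simpa using hlen
        refine ih (l1 ++ x :: l3) (by simp; omega) ⟨x, by simp, hxk⟩ ?_
        simpa [List.append_assoc] using cnew

lemma chain_glue {l1 l2 : List V} (h1 : List.Chain E k l1)
    (h2 : List.Chain E (List.getLast (k :: l1) (List.cons_ne_nil _ _)) l2) :
    List.Chain E k (l1 ++ l2) := by
  induction l1 generalizing k with
  | nil => simpa using h2
  | cons a t ih =>
    have h1' : E k a ∧ List.Chain E a t := List.isChain_cons_cons.mp h1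
    rw [List.cons_append]
    refine List.isChain_cons_cons.mpr ⟨h1'.1, ih h1'.2 ?_⟩
    rwa [List.getLast_cons_cons] at h2

lemma no_return (hk : ¬ OnCycle E k) {v : V} (hv : v ≠ k)
    (h1 : Relation.ReflTransGen E k v) (h2 : Relation.ReflTransGen E v k) : False := by
  obtain ⟨l1, hc1, hlast1⟩ := List.exists_isChain_cons_of_relationReflTransGen h1
  obtain ⟨l2, hc2, hlast2⟩ := List.exists_isChain_cons_of_relationReflTransGen h2
  have hl1ne : l1 ≠ [] := by
    rintro rfl
    exact hv (by simpa using hlast1.symm)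
  have hl2ne : l2 ≠ [] := by
    rintro rfl
    exact hv (by simpa using hlast2)
  have hvmem : v ∈ l1 := by
    have := List.getLast_mem (l := l1) hl1ne
    rwa [← List.getLast_cons (l := l1) (a := k) hl1ne, hlast1] at this
  have hc2' : List.Chain E (List.getLast (k :: l1) (List.cons_ne_nil _ _)) l2 := by
    rwa [hlast1]
  have hc : List.Chain E k (l1 ++ l2) := chain_glue hc1 hc2'
  have hlast2' : l2.getLast hl2ne = k := by
    rwa [List.getLast_cons (l := l2) (a := v) hl2ne] at hlast2
  have hdrop : l2.dropLast ++ [k] = l2 := by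
    conv_rhs => rw [← List.dropLast_append_getLast hl2ne]
    rw [hlast2']
  apply hk
  apply cycle_of_walk (l1 ++ l2.dropLast).length (l1 ++ l2.dropLast) le_rfl
    ⟨v, by simp [hvmem], hv⟩
  have : k :: ((l1 ++ l2.dropLast) ++ [k]) = k :: (l1 ++ l2) := by
    rw [List.append_assoc, hdrop]
  rw [this]
  exact hc

end Walk


section MR
variable {F : Type*} [Field F] {V : Type*} [Fintype V] [DecidableEq V]

lemma fits_one (E : V → V → Prop) : Fits E (1 : Matrix V V F) :=
  ⟨fun v => Matrix.one_apply_eq v, fun _ _ h _ => Matrix.one_apply_ne h⟩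

lemma minrank_exists (E : V → V → Prop) :
    ∃ A : Matrix V V F, Fits E A ∧ A.rank = minrank F E := by
  have hne : {r | ∃ A : Matrix V V F, Fits E A ∧ A.rank = r}.Nonempty :=
    ⟨(1 : Matrix V V F).rank, 1, fits_one E, rfl⟩
  exact Nat.sInf_mem hne

lemma minrank_le (E : V → V → Prop) {A : Matrix V V F} (hA : Fits E A) :
    minrank F E ≤ A.rank :=
  Nat.sInf_le ⟨A, hA, rfl⟩

end MR


def eqv1 {α : Type*} (p q : α → Prop) (h : ∀ a, q a → p a) :
    {u : {v // p v} // q u.1} ≃ {v // ¬ ¬ q v} where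
  toFun u := ⟨u.1.1, not_not_intro u.2⟩
  invFun v := ⟨⟨v.1, h v.1 (not_not.mp v.2)⟩, not_not.mp v.2⟩
  left_inv u := Subtype.ext (Subtype.ext rfl)
  right_inv v := Subtype.ext rfl

def eqv2 {α : Type*} (p q : α → Prop) :
    {u : {v // p v} // ¬ q u.1} ≃ {u : {v // ¬ q v} // p u.1} where
  toFun u := ⟨⟨u.1.1, u.2⟩, u.1.2⟩
  invFun u := ⟨⟨u.1.1, u.2⟩, u.1.2⟩
  left_inv u := Subtype.ext (Subtype.ext rfl)
  right_inv u := Subtype.ext (Subtype.ext rfl)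

theorem minrank_delete_acyclic_vertex {K : ℕ} (E : Fin K → Fin K → Prop) (k : Fin K)
    (hk : ¬ OnCycle E k) :
    minrank (ZMod 2) E
      = minrank (ZMod 2) (fun u v : {v : Fin K // v ≠ k} => E u.1 v.1) + 1 := by
  classical
  set E' : {v : Fin K // v ≠ k} → {v : Fin K // v ≠ k} → Prop :=
    fun u v => E u.1 v.1 with hE'
  -- UPPER BOUND
  obtain ⟨B, hB, hBr⟩ := minrank_exists (F := ZMod 2) E'
  set A0 : Matrix (Fin K) (Fin K) (ZMod 2) := fun u v =>
    if hu : u = k then (if v = k then 1 else 0)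
    else if hv : v = k then 0 else B ⟨u, hu⟩ ⟨v, hv⟩ with hA0
  have hA0fits : Fits E A0 := by
    constructor
    · intro v
      by_cases hv : v = k
      · subst hv; simp [hA0]
      · have hd : A0 v v = B ⟨v, hv⟩ ⟨v, hv⟩ := by simp [hA0, hv]
        rw [hd]
        exact hB.1 ⟨v, hv⟩
    · intro u v huv hnE
      by_cases hu : u = k
      · have hv : v ≠ k := fun h => huv (hu.trans h.symm)
        simp [hA0, hu, hv]
      · by_cases hv : v = k
        · simp [hA0, hu, hv]
        · have hBz : B ⟨u, hu⟩ ⟨v, hv⟩ = 0 :=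
            hB.2 ⟨u, hu⟩ ⟨v, hv⟩ (fun h => huv (congrArg Subtype.val h)) hnE
          simp [hA0, hu, hv, hBz]
  have h01 : ∀ u v : Fin K, (u ≠ k) → ¬ (v ≠ k) → A0 u v = 0 := by
    intro u v hu hv
    rw [not_not] at hv; subst hv
    simp [hA0, hu]
  have h02 : ∀ u v : Fin K, ¬ (u ≠ k) → (v ≠ k) → A0 u v = 0 := by
    intro u v hu hv
    rw [not_not] at hu; subst hu
    simp [hA0, hv]
  letI huniq : Unique {v : Fin K // ¬ v ≠ k} :=
    ⟨⟨⟨k, not_not_intro rfl⟩⟩, fun a => Subtype.ext (not_not.mp a.2)⟩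
  have hQ0 : (A0.submatrix (Subtype.val : {v : Fin K // ¬ v ≠ k} → Fin K)
      (Subtype.val : {v : Fin K // ¬ v ≠ k} → Fin K)).rank = 1 := by
    apply rank_unique_one
    show A0 k k = 1
    simp [hA0]
  have hP0 : A0.submatrix (Subtype.val : {v : Fin K // v ≠ k} → Fin K)
      (Subtype.val : {v : Fin K // v ≠ k} → Fin K) = B := by
    ext u v
    simp only [Matrix.submatrix_apply]
    simp [hA0, u.2, v.2]
  have hup1 := rank_le_block A0 (fun v => v ≠ k) h01 h02
  have hup2 := rank_block_le A0 (fun v => v ≠ k) h02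
  rw [hP0, hQ0] at hup1 hup2
  have hmr0 := minrank_le E hA0fits
  -- LOWER BOUND
  obtain ⟨A, hA, hAr⟩ := minrank_exists (F := ZMod 2) E
  set inS : Fin K → Prop := fun v => v ≠ k ∧ Relation.ReflTransGen E k v with hinS
  have hSnotk : ¬ inS k := fun h => h.1 rfl
  have hSucc : ∀ u v : Fin K, inS u → E u v → inS v := by
    intro u v hu hEuv
    by_cases hv : v = k
    · subst hv
      exact (no_return hk hu.1 hu.2 (Relation.ReflTransGen.single hEuv)).elim
    · exact ⟨hv, hu.2.tail hEuv⟩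
  have hcross : ∀ u v : Fin K, inS u → ¬ inS v → A u v = 0 := by
    intro u v hu hv
    have huv : u ≠ v := fun h => hv (h ▸ hu)
    have hnE : ¬ E u v := fun hEuv => hv (hSucc u v hu hEuv)
    exact hA.2 u v huv hnE
  have hlow1 := rank_block_le A (fun v => ¬ inS v)
    (fun u v hu hv => hcross u v (not_not.mp hu) hv)
  have h0 : ∀ u v : {v : Fin K // ¬ inS v}, ¬ (u.1 ≠ k) → (v.1 ≠ k) →
      (A.submatrix (Subtype.val : {v : Fin K // ¬ inS v} → Fin K)
        (Subtype.val : {v : Fin K // ¬ inS v} → Fin K)) u v = 0 := by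
    intro u v hu hv
    rw [not_not] at hu
    have hnE : ¬ E u.1 v.1 := by
      intro hEuv
      rw [hu] at hEuv
      exact v.2 ⟨hv, Relation.ReflTransGen.single hEuv⟩
    have huv : u.1 ≠ v.1 := by rw [hu]; exact fun h => hv h.symm
    exact hA.2 u.1 v.1 huv hnE
  have hlow2 := rank_block_le (A.submatrix (Subtype.val : {v : Fin K // ¬ inS v} → Fin K)
    (Subtype.val : {v : Fin K // ¬ inS v} → Fin K)) (fun u => u.1 ≠ k) h0
  letI huniq2 : Unique {u : {v : Fin K // ¬ inS v} // ¬ u.1 ≠ k} :=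
    ⟨⟨⟨⟨k, hSnotk⟩, not_not_intro rfl⟩⟩, fun a => Subtype.ext (Subtype.ext (not_not.mp a.2))⟩
  have hQ2 : ((A.submatrix (Subtype.val : {v : Fin K // ¬ inS v} → Fin K)
      (Subtype.val : {v : Fin K // ¬ inS v} → Fin K)).submatrix
      (Subtype.val : {u : {v : Fin K // ¬ inS v} // ¬ u.1 ≠ k} → {v : Fin K // ¬ inS v})
      (Subtype.val : {u : {v : Fin K // ¬ inS v} // ¬ u.1 ≠ k} → {v : Fin K // ¬ inS v})).rank
      = 1 := by
    apply rank_unique_one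
    show A k k = 1
    exact hA.1 k
  -- the fitting matrix C for the reduced graph
  set C : Matrix {v : Fin K // v ≠ k} {v : Fin K // v ≠ k} (ZMod 2) := fun u v =>
    if inS u.1 ↔ inS v.1 then A u.1 v.1 else 0 with hC
  have hCfits : Fits E' C := by
    constructor
    · intro v
      have : C v v = A v.1 v.1 := if_pos Iff.rfl
      rw [this]
      exact hA.1 v.1
    · intro u v huv hnE
      by_cases hiff : inS u.1 ↔ inS v.1
      · have : C u v = A u.1 v.1 := if_pos hiff
        rw [this]
        exact hA.2 u.1 v.1 (fun h => huv (Subtype.ext h)) hnE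
      · exact if_neg hiff
  have hc1 : ∀ u v : {v : Fin K // v ≠ k}, inS u.1 → ¬ inS v.1 → C u v = 0 :=
    fun u v hu hv => if_neg (fun h => hv (h.mp hu))
  have hc2 : ∀ u v : {v : Fin K // v ≠ k}, ¬ inS u.1 → inS v.1 → C u v = 0 :=
    fun u v hu hv => if_neg (fun h => hu (h.mpr hv))
  have hlow3 := rank_le_block C (fun u => inS u.1) hc1 hc2
  -- identify blocks of C with blocks of A
  let e1 : {u : {v : Fin K // v ≠ k} // inS u.1} ≃ {v : Fin K // ¬ ¬ inS v} :=
    eqv1 (fun v => v ≠ k) inS (fun v hv => hv.1)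
  have hCP : C.submatrix
      (Subtype.val : {u : {v : Fin K // v ≠ k} // inS u.1} → {v : Fin K // v ≠ k})
      (Subtype.val : {u : {v : Fin K // v ≠ k} // inS u.1} → {v : Fin K // v ≠ k})
      = (A.submatrix (Subtype.val : {v : Fin K // ¬ ¬ inS v} → Fin K)
          (Subtype.val : {v : Fin K // ¬ ¬ inS v} → Fin K)).submatrix e1 e1 := by
    ext u v
    simp only [Matrix.submatrix_apply]
    exact if_pos (iff_of_true u.2 v.2)
  let e2 : {u : {v : Fin K // v ≠ k} // ¬ inS u.1} ≃ {u : {v : Fin K // ¬ inS v} // u.1 ≠ k} :=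
    eqv2 (fun v => v ≠ k) inS
  have hCQ : C.submatrix
      (Subtype.val : {u : {v : Fin K // v ≠ k} // ¬ inS u.1} → {v : Fin K // v ≠ k})
      (Subtype.val : {u : {v : Fin K // v ≠ k} // ¬ inS u.1} → {v : Fin K // v ≠ k})
      = ((A.submatrix (Subtype.val : {v : Fin K // ¬ inS v} → Fin K)
          (Subtype.val : {v : Fin K // ¬ inS v} → Fin K)).submatrix
          (Subtype.val : {u : {v : Fin K // ¬ inS v} // u.1 ≠ k} → {v : Fin K // ¬ inS v})
          (Subtype.val : {u : {v : Fin K // ¬ inS v} // u.1 ≠ k} → {v : Fin K // ¬ inS v})).submatrix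
          e2 e2 := by
    ext u v
    simp only [Matrix.submatrix_apply]
    exact if_pos (iff_of_false u.2 v.2)
  have hrCP : (C.submatrix
      (Subtype.val : {u : {v : Fin K // v ≠ k} // inS u.1} → {v : Fin K // v ≠ k})
      (Subtype.val : {u : {v : Fin K // v ≠ k} // inS u.1} → {v : Fin K // v ≠ k})).rank
      = (A.submatrix (Subtype.val : {v : Fin K // ¬ ¬ inS v} → Fin K)
          (Subtype.val : {v : Fin K // ¬ ¬ inS v} → Fin K)).rank := by
    rw [hCP]
    exact Matrix.rank_submatrix _ e1 e1
  have hrCQ : (C.submatrix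
      (Subtype.val : {u : {v : Fin K // v ≠ k} // ¬ inS u.1} → {v : Fin K // v ≠ k})
      (Subtype.val : {u : {v : Fin K // v ≠ k} // ¬ inS u.1} → {v : Fin K // v ≠ k})).rank
      = ((A.submatrix (Subtype.val : {v : Fin K // ¬ inS v} → Fin K)
          (Subtype.val : {v : Fin K // ¬ inS v} → Fin K)).submatrix
          (Subtype.val : {u : {v : Fin K // ¬ inS v} // u.1 ≠ k} → {v : Fin K // ¬ inS v})
          (Subtype.val : {u : {v : Fin K // ¬ inS v} // u.1 ≠ k} → {v : Fin K // ¬ inS v})).rank := by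
    rw [hCQ]
    exact Matrix.rank_submatrix _ e2 e2
  have hmrC := minrank_le E' hCfits
  rw [hQ2] at hlow2
  rw [hrCP, hrCQ] at hlow3
  omega
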